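/- Let R be a semisimple artinian ring, I a left ideal, a ∈ R, and suppose Ra + I = Re where e is an idempotent. Then there exist i ∈ I and a unit u ∈ R such that a + i = u·e. -/

import Mathlib

open Submodule LinearMap Function

section Cancellation

variable {R : Type*} [Ring R] {M : Type*} [AddCommGroup M] [Module R M]

private lemma eq_sup_of_atom_lt {A A' X : Submodule R M} (hA' : IsAtom A')
    (h1 : A < X) (h2 : X ≤ A ⊔ A') : X = A ⊔ A' := by
  have hX : X ⊓ (A' ⊔ A) = (X ⊓ A') ⊔ A := (inf_sup_assoc_of_le A' h1.le).symm
  rw [sup_comm A' A, inf_eq_left.mpr h2] at hX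
  rcases (hA'.le_iff).mp (inf_le_right : X ⊓ A' ≤ A') with h | h
  · rw [h, bot_sup_eq] at hX; exact absurd hX h1.ne'
  · rw [h, sup_comm] at hX; exact hX

private lemma exists_common_compl [IsSemisimpleModule R M]
    {A A' V : Submodule R M} (hA : IsAtom A) (hA' : IsAtom A')
    (g : A ≃ₗ[R] A') (hVA : V ⊓ A = ⊥) (hVA' : V ⊓ A' = ⊥) :
    ∃ U, V ≤ U ∧ IsCompl A U ∧ IsCompl A' U := by
  set P := A ⊔ A' with hP
  obtain ⟨U₁, hU₁P, hVU₁, hAU₁, hA'U₁, hAsup, hA'sup⟩ :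
      ∃ U₁, U₁ ≤ P ∧ V ⊓ P ≤ U₁ ∧ A ⊓ U₁ = ⊥ ∧ A' ⊓ U₁ = ⊥ ∧
        A ⊔ U₁ = P ∧ A' ⊔ U₁ = P := by
    by_cases hAA' : A = A'
    · refine ⟨⊥, bot_le, ?_, by simp, by simp, by simp [hP, ← hAA'], by simp [hP, ← hAA']⟩
      rw [hP, ← hAA', sup_idem, hVA]
    · have hAA'bot : A ⊓ A' = ⊥ := disjoint_iff.mp (hA.disjoint_of_ne hA' hAA')
      by_cases hVP : V ⊓ P = ⊥
      · -- use the "diagonal" of g as common complement inside P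
        set Δ : Submodule R M := LinearMap.range (A.subtype + A'.subtype ∘ₗ g.toLinearMap)
          with hΔ
        have hΔmem : ∀ x : M, x ∈ Δ ↔ ∃ y : A, (y : M) + (g y : M) = x := by
          intro x
          constructor
          · rintro ⟨y, rfl⟩; exact ⟨y, rfl⟩
          · rintro ⟨y, rfl⟩; exact ⟨y, rfl⟩
        have hΔP : Δ ≤ P := by
          intro x hx
          obtain ⟨y, rfl⟩ := (hΔmem x).mp hx
          exact add_mem_sup y.2 (g y).2
        have hΔA : A ⊓ Δ = ⊥ := by
          rw [eq_bot_iff]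
          rintro x ⟨hxA, hxΔ⟩
          obtain ⟨y, rfl⟩ := (hΔmem _).mp hxΔ
          have h1 : (g y : M) ∈ A ⊓ A' := ⟨by simpa using sub_mem hxA y.2, (g y).2⟩
          rw [hAA'bot] at h1
          have h2 : g y = 0 := Subtype.ext (by simpa using h1)
          have hy : y = 0 := by
            apply g.injective; simp [h2]
          simp [hy]
        have hΔA' : A' ⊓ Δ = ⊥ := by
          rw [eq_bot_iff]
          rintro x ⟨hxA', hxΔ⟩
          obtain ⟨y, rfl⟩ := (hΔmem _).mp hxΔ
          have h1 : (y : M) ∈ A ⊓ A' := ⟨y.2, by simpa using sub_mem hxA' (g y).2⟩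
          rw [hAA'bot] at h1
          have hy : y = 0 := Subtype.ext (by simpa using h1)
          simp [hy]
        have hΔAsup : A ⊔ Δ = P := by
          refine le_antisymm (sup_le le_sup_left hΔP) (sup_le le_sup_left ?_)
          intro a' ha'
          set y := g.symm ⟨a', ha'⟩ with hy
          have h1 : (y : M) + (g y : M) ∈ Δ := (hΔmem _).mpr ⟨y, rfl⟩
          have h2 : (g y : M) = a' := by rw [hy]; simp
          have h3 : a' = ((y : M) + (g y : M)) - (y : M) := by rw [h2]; abel
          rw [h3]
          exact sub_mem ((le_sup_right : Δ ≤ A ⊔ Δ) h1) ((le_sup_left : A ≤ A ⊔ Δ) y.2)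
        have hΔA'sup : A' ⊔ Δ = P := by
          refine le_antisymm (sup_le le_sup_right hΔP) (sup_le ?_ le_sup_left)
          intro a ha
          set y : A := ⟨a, ha⟩ with hy
          have h1 : (y : M) + (g y : M) ∈ Δ := (hΔmem _).mpr ⟨y, rfl⟩
          have h3 : a = ((y : M) + (g y : M)) - (g y : M) := by rw [hy]; simp
          rw [h3]
          exact sub_mem ((le_sup_right : Δ ≤ A' ⊔ Δ) h1) ((le_sup_left : A' ≤ A' ⊔ Δ) (g y).2)
        exact ⟨Δ, hΔP, by simp [hVP], hΔA, hΔA', hΔAsup, hΔA'sup⟩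
      · -- V ⊓ P is an atom B and works as common complement inside P
        obtain ⟨B, hBle, hBsimple⟩ :=
          (IsSemisimpleModule.eq_bot_or_exists_simple_le (V ⊓ P)).resolve_left hVP
        have hBV : B ≤ V := hBle.trans inf_le_left
        have hBP : B ≤ P := hBle.trans inf_le_right
        have hBA : B ⊓ A = ⊥ := le_bot_iff.mp (hVA ▸ inf_le_inf_right A hBV)
        have hBA' : B ⊓ A' = ⊥ := le_bot_iff.mp (hVA' ▸ inf_le_inf_right A' hBV)
        have hBne : B ≠ ⊥ := (isSimpleModule_iff_isAtom.mp hBsimple).1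
        have hstep : ∀ {A₀ : Submodule R M}, B ⊓ A₀ = ⊥ → A₀ < B ⊔ A₀ := by
          intro A₀ h0
          rcases lt_or_eq_of_le (le_sup_right : A₀ ≤ B ⊔ A₀) with h | h
          · exact h
          · exfalso
            apply hBne
            have hBA₀ : B ≤ A₀ := h ▸ (le_sup_left : B ≤ B ⊔ A₀)
            rw [← h0, inf_eq_left.mpr hBA₀]
        have hBAP : B ⊔ A = P := by
          have h1 := eq_sup_of_atom_lt hA' (hstep hBA)
            (sup_le (hBP.trans le_rfl) (le_sup_left : A ≤ A ⊔ A'))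
          exact h1
        have hBA'P : B ⊔ A' = P := by
          have h1 := eq_sup_of_atom_lt hA (hstep hBA')
            (sup_le (by rw [sup_comm]; exact hBP) (le_sup_left : A' ≤ A' ⊔ A))
          rw [h1, sup_comm, hP]
        have hVPB : V ⊓ P = B := by
          have h1 : (V ⊓ P) ⊓ A = ⊥ :=
            le_bot_iff.mp (hVA ▸ inf_le_inf_right A (inf_le_left : V ⊓ P ≤ V))
          have h2 : (V ⊓ P) ⊓ A ⊔ B = (V ⊓ P) ⊓ (A ⊔ B) := inf_sup_assoc_of_le A hBle
          rw [h1, bot_sup_eq, sup_comm A B, hBAP, inf_eq_left.mpr inf_le_right] at h2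
          exact h2.symm
        exact ⟨B, hBP, hVPB.le, by rw [inf_comm]; exact hBA, by rw [inf_comm]; exact hBA',
          by rw [sup_comm]; exact hBAP, by rw [sup_comm]; exact hBA'P⟩
  obtain ⟨W, hW⟩ := exists_isCompl (P ⊔ V)
  have hsub : ∀ {A₀ : Submodule R M}, A₀ ≤ P → A₀ ⊓ U₁ = ⊥ → A₀ ⊔ U₁ = P →
      IsCompl A₀ (U₁ ⊔ V ⊔ W) := by
    intro A₀ hA₀P hinf hsup
    constructor
    · rw [disjoint_iff, eq_bot_iff]
      rintro x ⟨hxA, hxU⟩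
      obtain ⟨y, hy, w, hw, rfl⟩ := mem_sup.mp hxU
      obtain ⟨u, hu, v, hv, rfl⟩ := mem_sup.mp hy
      have hxA' : u + v + w ∈ A₀ := hxA
      have hwPV : w ∈ P ⊔ V := by
        have h3 : w = (u + v + w) - u - v := by abel
        rw [h3]
        exact sub_mem (sub_mem ((le_sup_left : P ≤ P ⊔ V) (hA₀P hxA'))
          ((le_sup_left : P ≤ P ⊔ V) (hU₁P hu))) ((le_sup_right : V ≤ P ⊔ V) hv)
      have hw0 : w = 0 := by
        have h4 : w ∈ (P ⊔ V) ⊓ W := Submodule.mem_inf.mpr ⟨hwPV, hw⟩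
        rw [disjoint_iff.mp hW.disjoint] at h4
        simpa using h4
      subst hw0
      have hvP : v ∈ P := by
        have h3 : v = (u + v + 0) - u := by abel
        rw [h3]
        exact sub_mem (hA₀P hxA') (hU₁P hu)
      have hvU₁ : v ∈ U₁ := hVU₁ (Submodule.mem_inf.mpr ⟨hv, hvP⟩)
      have hxU₁ : u + v + 0 ∈ U₁ := by
        rw [add_zero]; exact add_mem hu hvU₁
      have h5 : u + v + 0 ∈ A₀ ⊓ U₁ := Submodule.mem_inf.mpr ⟨hxA', hxU₁⟩
      rw [hinf] at h5
      exact h5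
    · rw [codisjoint_iff]
      have h3 : A₀ ⊔ (U₁ ⊔ V ⊔ W) = ((A₀ ⊔ U₁) ⊔ V) ⊔ W := by
        rw [← sup_assoc, ← sup_assoc]
      rw [h3, hsup]
      exact codisjoint_iff.mp hW.codisjoint
  exact ⟨U₁ ⊔ V ⊔ W, ((le_sup_right : V ≤ U₁ ⊔ V).trans (le_sup_left : _ ≤ _ ⊔ W)),
    hsub le_sup_left hAU₁ hAsup, hsub le_sup_right hA'U₁ hA'sup⟩

private lemma exists_swap_auto [IsSemisimpleModule R M]
    {A A' V : Submodule R M} (hA : IsAtom A) (hA' : IsAtom A')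
    (g : A ≃ₗ[R] A') (hVA : V ⊓ A = ⊥) (hVA' : V ⊓ A' = ⊥) :
    ∃ χ : M ≃ₗ[R] M, Submodule.map (χ : M →ₗ[R] M) A = A' ∧ ∀ v ∈ V, χ v = v := by
  obtain ⟨U, hVU, hAU, hA'U⟩ := exists_common_compl hA hA' g hVA hVA'
  set e₁ := Submodule.prodEquivOfIsCompl A U hAU with he₁
  set e₂ := Submodule.prodEquivOfIsCompl A' U hA'U with he₂
  set χ : M ≃ₗ[R] M := e₁.symm ≪≫ₗ (g.prodCongr (LinearEquiv.refl R U)) ≪≫ₗ e₂ with hχ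
  have hχa : ∀ a : A, χ (a : M) = (g a : M) := by
    intro a
    show e₂ ((g.prodCongr (LinearEquiv.refl R U)) (e₁.symm (a : M))) = _
    rw [he₁, Submodule.prodEquivOfIsCompl_symm_apply_left A U hAU a]
    have h2 : (g.prodCongr (LinearEquiv.refl R U)) ((a, 0) : A × U) = ((g a, 0) : A' × U) := by
      simp [LinearEquiv.prodCongr_apply]
    rw [h2, he₂, Submodule.coe_prodEquivOfIsCompl']
    simp
  have hχv : ∀ v ∈ V, χ v = v := by
    intro v hv
    have hvU : v ∈ U := hVU hv
    show e₂ ((g.prodCongr (LinearEquiv.refl R U)) (e₁.symm v)) = v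
    have h1 : e₁.symm v = ((0, ⟨v, hvU⟩) : A × U) := by
      have h0 := Submodule.prodEquivOfIsCompl_symm_apply_right A U hAU (⟨v, hvU⟩ : U)
      rw [he₁]
      simpa using h0
    rw [h1]
    have h2 : (g.prodCongr (LinearEquiv.refl R U)) ((0, ⟨v, hvU⟩) : A × U) =
        ((0, ⟨v, hvU⟩) : A' × U) := by
      simp [LinearEquiv.prodCongr_apply]
    rw [h2, he₂, Submodule.coe_prodEquivOfIsCompl']
    simp
  refine ⟨χ, ?_, hχv⟩
  apply le_antisymm
  · rintro x hx
    obtain ⟨a, ha, rfl⟩ := Submodule.mem_map.mp hx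
    rw [LinearEquiv.coe_coe, show χ a = ((g ⟨a, ha⟩ : A') : M) from hχa ⟨a, ha⟩]
    exact (g ⟨a, ha⟩).2
  · intro a' ha'
    refine Submodule.mem_map.mpr ⟨(g.symm ⟨a', ha'⟩ : M), (g.symm ⟨a', ha'⟩).2, ?_⟩
    rw [LinearEquiv.coe_coe, hχa]
    simp

private lemma exists_automorphism_map_eq_range [IsSemisimpleModule R M] [IsArtinian R M] :
    ∀ (C : Submodule R M) (f : C →ₗ[R] M), Function.Injective f →
      ∃ φ : M ≃ₗ[R] M, Submodule.map (φ : M →ₗ[R] M) C = LinearMap.range f := by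
  intro C
  induction C using WellFoundedLT.induction with
  | ind C IH =>
  intro f hf
  rcases eq_or_ne C ⊥ with rfl | hC
  · refine ⟨LinearEquiv.refl R M, ?_⟩
    have hf0 : f = 0 := by
      ext x
      obtain rfl : x = 0 := Subsingleton.elim x 0
      simp
    rw [hf0]
    simp
  · obtain ⟨S, hSC, hSsimple⟩ :=
      (IsSemisimpleModule.eq_bot_or_exists_simple_le C).resolve_left hC
    haveI : IsSimpleModule R S := hSsimple
    have hSatom : IsAtom S := isSimpleModule_iff_isAtom.mp hSsimple
    set Ssub := S.comap C.subtype with hSsubdef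
    obtain ⟨Tsub, hcompl⟩ := exists_isCompl Ssub
    set T := Tsub.map C.subtype with hTdef
    have hTC : T ≤ C := Submodule.map_subtype_le _ _
    have hmapS : Ssub.map C.subtype = S := by
      rw [hSsubdef, Submodule.map_comap_subtype, inf_eq_right.mpr hSC]
    have hST : S ⊓ T = ⊥ := by
      rw [← hmapS, hTdef, ← Submodule.map_inf _ (Submodule.injective_subtype C),
        disjoint_iff.mp hcompl.disjoint, Submodule.map_bot]
    have hSupT : S ⊔ T = C := by
      rw [← hmapS, hTdef, ← Submodule.map_sup, codisjoint_iff.mp hcompl.codisjoint,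
        Submodule.map_top, Submodule.range_subtype]
    have hTlt : T < C := by
      rcases lt_or_eq_of_le hTC with h | h
      · exact h
      · exfalso
        have hST' : S ≤ T := by rw [h]; exact hSC
        exact hSatom.1 ((inf_eq_left.mpr hST').symm.trans hST)
    set fT := f ∘ₗ Submodule.inclusion hTC with hfTdef
    have hfTinj : Function.Injective fT := hf.comp (Submodule.inclusion_injective hTC)
    have hrangefT : LinearMap.range fT = Submodule.map f Tsub := by
      rw [hfTdef, LinearMap.range_comp, Submodule.range_inclusion, hTdef,
        Submodule.comap_map_eq_of_injective (Submodule.injective_subtype C)]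
    obtain ⟨φ₁, hφ₁⟩ := IH T hTlt fT hfTinj
    rw [hrangefT] at hφ₁
    set T' := Submodule.map f Tsub with hT'def
    set S' := Submodule.map f Ssub with hS'def
    set S₁ := Submodule.map (φ₁ : M →ₗ[R] M) S with hS₁def
    have hφ₁inj : Function.Injective φ₁ := φ₁.injective
    have hS₁T' : T' ⊓ S₁ = ⊥ := by
      rw [← hφ₁, hS₁def, ← Submodule.map_inf _ hφ₁inj, inf_comm T S, hST, Submodule.map_bot]
    have hS'T' : T' ⊓ S' = ⊥ := by
      rw [hT'def, hS'def, ← Submodule.map_inf _ hf, inf_comm Tsub Ssub,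
        disjoint_iff.mp hcompl.disjoint, Submodule.map_bot]
    have hS₁simple : IsSimpleModule R S₁ :=
      IsSimpleModule.congr (Submodule.equivMapOfInjective _ hφ₁inj S).symm
    have hS'simple : IsSimpleModule R S' := by
      haveI : IsSimpleModule R Ssub :=
        IsSimpleModule.congr (Submodule.comapSubtypeEquivOfLe hSC)
      exact IsSimpleModule.congr (Submodule.equivMapOfInjective f hf Ssub).symm
    set g₁ : S₁ ≃ₗ[R] S' :=
      (Submodule.equivMapOfInjective _ hφ₁inj S).symm ≪≫ₗ
        (Submodule.comapSubtypeEquivOfLe hSC).symm ≪≫ₗ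
        (Submodule.equivMapOfInjective f hf Ssub) with hg₁
    obtain ⟨χ, hχmap, hχfix⟩ := exists_swap_auto (isSimpleModule_iff_isAtom.mp hS₁simple)
      (isSimpleModule_iff_isAtom.mp hS'simple) g₁ hS₁T' hS'T'
    refine ⟨φ₁ ≪≫ₗ χ, ?_⟩
    have htrans : ∀ p : Submodule R M,
        Submodule.map ((φ₁ ≪≫ₗ χ : M ≃ₗ[R] M) : M →ₗ[R] M) p = Submodule.map (χ : M →ₗ[R] M) (Submodule.map (φ₁ : M →ₗ[R] M) p) := by
      intro p
      ext x
      simp only [Submodule.mem_map, LinearEquiv.trans_apply]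
      constructor
      · rintro ⟨y, hy, rfl⟩; exact ⟨φ₁ y, ⟨y, hy, rfl⟩, rfl⟩
      · rintro ⟨y, ⟨z, hz, rfl⟩, rfl⟩; exact ⟨z, hz, rfl⟩
    have hχT' : Submodule.map (χ : M →ₗ[R] M) T' = T' := by
      apply le_antisymm
      · rintro x hx
        obtain ⟨v, hv, rfl⟩ := Submodule.mem_map.mp hx
        rw [LinearEquiv.coe_coe, hχfix v hv]; exact hv
      · intro x hx
        exact Submodule.mem_map.mpr ⟨x, hx, hχfix x hx⟩
    have hrange : LinearMap.range f = S' ⊔ T' := by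
      rw [← Submodule.map_top, ← codisjoint_iff.mp hcompl.codisjoint, Submodule.map_sup,
        ← hS'def, ← hT'def]
    have hmapφ₁C : Submodule.map (φ₁ : M →ₗ[R] M) C = S₁ ⊔ T' := by
      rw [← hSupT, Submodule.map_sup, hφ₁]
    rw [htrans, hmapφ₁C, Submodule.map_sup, hχmap, hχT', hrange]

private lemma compl_equiv_compl [IsSemisimpleModule R M] [IsArtinian R M]
    {A C D B : Submodule R M} (hCA : IsCompl C A) (hDB : IsCompl D B) (e : C ≃ₗ[R] D) :
    Nonempty (A ≃ₗ[R] B) := by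
  obtain ⟨φ, hφ⟩ := exists_automorphism_map_eq_range C (D.subtype ∘ₗ e.toLinearMap)
    ((Submodule.injective_subtype D).comp e.injective)
  have hrange : LinearMap.range (D.subtype ∘ₗ e.toLinearMap) = D := by
    rw [LinearMap.range_comp, LinearEquiv.range, Submodule.map_top, Submodule.range_subtype]
  rw [hrange] at hφ
  have hφinj : Function.Injective φ := φ.injective
  have h1 : IsCompl D (Submodule.map (φ : M →ₗ[R] M) A) := by
    constructor
    · rw [disjoint_iff, ← hφ, ← Submodule.map_inf _ hφinj, disjoint_iff.mp hCA.disjoint,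
        Submodule.map_bot]
    · rw [codisjoint_iff, ← hφ, ← Submodule.map_sup, codisjoint_iff.mp hCA.codisjoint,
        Submodule.map_top]
      exact LinearMap.range_eq_top.mpr φ.surjective
  exact ⟨(Submodule.equivMapOfInjective _ hφinj A) ≪≫ₗ
    (Submodule.quotientEquivOfIsCompl D _ h1).symm ≪≫ₗ (Submodule.quotientEquivOfIsCompl D B hDB)⟩

end Cancellation

section StableRange

variable {R : Type*} [Ring R]

/-- A semisimple ring has stable range one: if `Ra + J = R` then some element of
the coset `a + J` is a unit. -/
private lemma exists_mem_unit_of_span_sup_eq_top [IsSemisimpleRing R]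
    (J : Ideal R) (a : R) (h : Ideal.span {a} ⊔ J = ⊤) :
    ∃ j ∈ J, IsUnit (a + j) := by
  set f := LinearMap.toSpanSingleton R R a with hfdef
  set D : Submodule R R := Ideal.span {a} with hDdef
  have hfrange : LinearMap.range f = D := by
    rw [hfdef, hDdef, Ideal.span, ← LinearMap.span_singleton_eq_range]
  set A := LinearMap.ker f with hAdef
  obtain ⟨C, hAC⟩ := exists_isCompl A
  -- the restriction of f to C is injective with range D
  set fC := f ∘ₗ C.subtype with hfCdef
  have hfCinj : Function.Injective fC := by
    rw [← LinearMap.ker_eq_bot, hfCdef, LinearMap.ker_comp]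
    rw [eq_bot_iff]
    intro x hx
    have hx2 : (x : R) ∈ A ⊓ C := Submodule.mem_inf.mpr ⟨hx, x.2⟩
    rw [disjoint_iff.mp hAC.disjoint] at hx2
    simpa [Submodule.mem_bot] using Subtype.ext (by simpa using hx2)
  have hmapfA : Submodule.map f A = ⊥ := by
    rw [eq_bot_iff]
    rintro x hx
    obtain ⟨y, hy, rfl⟩ := Submodule.mem_map.mp hx
    simpa using LinearMap.mem_ker.mp hy
  have hmapfC : Submodule.map f C = D := by
    have h1 : D = Submodule.map f A ⊔ Submodule.map f C := by
      rw [← Submodule.map_sup, codisjoint_iff.mp hAC.codisjoint, Submodule.map_top, hfrange]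
    rw [h1, hmapfA, bot_sup_eq]
  have hrangefC : LinearMap.range fC = D := by
    rw [hfCdef, LinearMap.range_comp, Submodule.range_subtype, hmapfC]
  set eCD : C ≃ₗ[R] D :=
    (LinearEquiv.ofInjective fC hfCinj) ≪≫ₗ (LinearEquiv.ofEq _ _ hrangefC) with heCD
  -- find B ≤ J a complement of D
  obtain ⟨Bsub, hBsub⟩ := exists_isCompl ((D ⊓ J).comap (J : Submodule R R).subtype)
  set B := Submodule.map (J : Submodule R R).subtype Bsub with hBdef
  have hBJ : B ≤ J := Submodule.map_subtype_le _ _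
  have hmapK : Submodule.map (J : Submodule R R).subtype
      ((D ⊓ J).comap (J : Submodule R R).subtype) = D ⊓ J := by
    rw [Submodule.map_comap_subtype, inf_eq_right.mpr inf_le_right]
  have hBDJ : B ⊓ (D ⊓ J) = ⊥ := by
    rw [hBdef, ← hmapK, ← Submodule.map_inf _ (Submodule.injective_subtype _),
      disjoint_iff.mp hBsub.disjoint.symm, Submodule.map_bot]
  have hBDJsup : B ⊔ (D ⊓ J) = J := by
    rw [hBdef, ← hmapK, ← Submodule.map_sup, codisjoint_iff.mp hBsub.codisjoint.symm,
      Submodule.map_top, Submodule.range_subtype]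
  have hDB : IsCompl D B := by
    constructor
    · rw [disjoint_iff]
      have h1 : D ⊓ B = (D ⊓ J) ⊓ B := by
        rw [inf_assoc, inf_eq_right.mpr hBJ]
      rw [h1, inf_comm, hBDJ]
    · rw [codisjoint_iff]
      have h1 : (J : Submodule R R) ≤ D ⊔ B := by
        rw [← hBDJsup]
        exact sup_le le_sup_right (inf_le_left.trans le_sup_left)
      rw [← top_le_iff, ← h]
      exact sup_le le_sup_left h1
  obtain ⟨θ⟩ := compl_equiv_compl hAC.symm hDB eCD
  set u_e : R ≃ₗ[R] R :=
    (Submodule.prodEquivOfIsCompl A C hAC).symm ≪≫ₗ (θ.prodCongr eCD) ≪≫ₗ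
      (Submodule.prodEquivOfIsCompl B D hDB.symm) with hu_e
  have hmul : ∀ r : R, u_e r = r * (u_e 1) := by
    intro r
    conv_lhs => rw [← mul_one r, ← smul_eq_mul, map_smul, smul_eq_mul]
  have hmulsymm : ∀ r : R, u_e.symm r = r * (u_e.symm 1) := by
    intro r
    conv_lhs => rw [← mul_one r, ← smul_eq_mul, map_smul, smul_eq_mul]
  set t := u_e 1 with ht
  set s := u_e.symm 1 with hs
  have hts : t * s = 1 := by
    have h1 := hmulsymm t
    rw [← h1, ht, LinearEquiv.symm_apply_apply]
  have hst : s * t = 1 := by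
    have h1 := hmul s
    rw [← h1, hs, LinearEquiv.apply_symm_apply]
  set p := (Submodule.prodEquivOfIsCompl A C hAC).symm 1 with hp
  have hxy : (p.1 : R) + (p.2 : R) = 1 := by
    have h1 := (Submodule.prodEquivOfIsCompl A C hAC).apply_symm_apply 1
    rw [← hp, Submodule.coe_prodEquivOfIsCompl'] at h1
    exact h1
  have hux : u_e (p.1 : R) = (θ p.1 : R) := by
    show ((Submodule.prodEquivOfIsCompl B D hDB.symm) ((θ.prodCongr eCD)
      ((Submodule.prodEquivOfIsCompl A C hAC).symm (p.1 : R)))) = _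
    rw [Submodule.prodEquivOfIsCompl_symm_apply_left A C hAC p.1]
    have h2 : (θ.prodCongr eCD) ((p.1, 0) : A × C) = ((θ p.1, 0) : B × D) := by
      simp [LinearEquiv.prodCongr_apply]
    rw [h2, Submodule.coe_prodEquivOfIsCompl']
    simp
  have huy : u_e (p.2 : R) = (eCD p.2 : R) := by
    show ((Submodule.prodEquivOfIsCompl B D hDB.symm) ((θ.prodCongr eCD)
      ((Submodule.prodEquivOfIsCompl A C hAC).symm (p.2 : R)))) = _
    rw [Submodule.prodEquivOfIsCompl_symm_apply_right A C hAC p.2]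
    have h2 : (θ.prodCongr eCD) ((0, p.2) : A × C) = ((0, eCD p.2) : B × D) := by
      simp [LinearEquiv.prodCongr_apply]
    rw [h2, Submodule.coe_prodEquivOfIsCompl']
    simp
  have heCDy : (eCD p.2 : R) = (p.2 : R) * a := by
    show ((LinearEquiv.ofEq _ _ hrangefC) ((LinearEquiv.ofInjective fC hfCinj) p.2) : R) = _
    rw [LinearEquiv.coe_ofEq_apply, LinearEquiv.ofInjective_apply]
    show f ((p.2 : R)) = _
    rw [hfdef, LinearMap.toSpanSingleton_apply, smul_eq_mul]
  have hxa : (p.1 : R) * a = 0 := by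
    have h1 : (p.1 : R) • a = 0 := p.1.2
    rwa [smul_eq_mul] at h1
  have hya : (p.2 : R) * a = a := by
    have h2 : ((p.1 : R) + (p.2 : R)) * a = a := by
      have h3 := congrArg (· * a) hxy
      simpa using h3
    calc (p.2 : R) * a = ((p.1 : R) + (p.2 : R)) * a - (p.1 : R) * a := by
          rw [add_mul]; abel
      _ = a := by rw [h2, hxa, sub_zero]
  have hteq : t = (θ p.1 : R) + a := by
    have h1 : u_e ((p.1 : R) + (p.2 : R)) = (θ p.1 : R) + (p.2 : R) * a := by
      rw [map_add, hux, huy, heCDy]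
    have h2 : u_e 1 = u_e ((p.1 : R) + (p.2 : R)) := congrArg u_e hxy.symm
    exact ht.trans ((h2.trans h1).trans (congrArg (fun z => (θ p.1 : R) + z) hya))
  exact ⟨(θ p.1 : R), hBJ (θ p.1).2,
    ⟨⟨t, s, hts, hst⟩, by
      show t = a + (θ p.1 : R)
      rw [hteq]
      exact add_comm _ _⟩⟩

end StableRange

/-- Let `R` be a semisimple artinian ring, `I` a left ideal, `a ∈ R`,
and suppose `Ra + I = Re` where `e` is an idempotent. Then there exist `i ∈ I` and a
unit `u ∈ R` such that `a + i = u·e`. -/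
theorem coset_unit_mul_idempotent {R : Type*} [Ring R] [IsSemisimpleRing R]
    (I : Ideal R) (a e : R) (he : e * e = e)
    (h : Ideal.span {a} ⊔ I = Ideal.span {e}) :
    ∃ i ∈ I, ∃ u : Rˣ, a + i = (u : R) * e := by
  have hmem_e : ∀ x : R, x ∈ Ideal.span ({e} : Set R) → x * e = x := by
    intro x hx
    obtain ⟨r, rfl⟩ := Ideal.mem_span_singleton'.mp hx
    rw [mul_assoc, he]
  have haD : a ∈ Ideal.span ({e} : Set R) := by
    rw [← h]
    exact Submodule.mem_sup_left (Ideal.subset_span rfl)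
  have hae : a * e = a := hmem_e a haD
  set J : Ideal R := (I ⊓ Ideal.span {e}) ⊔ Ideal.span {1 - e} with hJ
  have hsup : Ideal.span {a} ⊔ J = ⊤ := by
    rw [hJ, ← sup_assoc]
    have h2 : Ideal.span ({a} : Set R) ≤ Ideal.span ({e} : Set R) := by
      rw [← h]; exact le_sup_left
    have h3 := sup_inf_assoc_of_le (x := Ideal.span ({a} : Set R)) I h2
    rw [h, inf_idem] at h3
    rw [← h3, Ideal.eq_top_iff_one]
    have h5 : e + (1 - e) ∈ Ideal.span ({e} : Set R) ⊔ Ideal.span ({1 - e} : Set R) :=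
      Submodule.add_mem_sup (Ideal.subset_span rfl) (Ideal.subset_span rfl)
    rw [show e + (1 - e) = (1 : R) by abel] at h5
    exact h5
  obtain ⟨j, hjJ, hunit⟩ := exists_mem_unit_of_span_sup_eq_top J a hsup
  obtain ⟨u, hu⟩ := hunit
  rw [hJ] at hjJ
  obtain ⟨j₁, hj₁, j₂, hj₂, rfl⟩ := Submodule.mem_sup.mp hjJ
  have hj₁I : j₁ ∈ I := (Submodule.mem_inf.mp hj₁).1
  have hj₁e : j₁ * e = j₁ := hmem_e j₁ (Submodule.mem_inf.mp hj₁).2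
  obtain ⟨r, hr⟩ := Ideal.mem_span_singleton'.mp hj₂
  have hj₂e : j₂ * e = 0 := by
    have h5 : (1 - e) * e = 0 := by rw [sub_mul, one_mul, he, sub_self]
    rw [← hr, mul_assoc, h5, mul_zero]
  refine ⟨j₁, hj₁I, u, ?_⟩
  have h6 : (↑u : R) * e = (a + (j₁ + j₂)) * e := by rw [hu]
  rw [add_mul, add_mul, hae, hj₁e, hj₂e, add_zero] at h6
  exact h6.symm
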